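/- Let W ⊆ ℝⁿ be a linear subspace with orthogonal projection P onto W, h₀ : ℝⁿ → ℝ continuously differentiable, κ : ℝⁿ → ℝⁿ continuously differentiable, ε > 0, and h(q, v) = h₀(q) - (ε/2)‖P(v - κ(q))‖². Let α : ℝ → ℝ be locally Lipschitz, strictly increasing, with α(0) = 0. Let T ∈ (0, ∞] and let q, v : [0, T) → ℝⁿ be curves such that φ(t) := h(q(t), v(t)) is differentiable with φ'(t) ≥ -α(φ(t)) for all t ∈ [0, T). If h(q(0), v(0)) ≥ 0, then h₀(q(t)) ≥ 0 for all t ∈ [0, T). -/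

import Mathlib

open scoped RealInnerProductSpace ENNReal

/-- Euclidean form of the paper's Proposition 2: if along curves `q, v` the value
`φ(t) = h(q(t), v(t))` of the backstepping CBF
`h(q, v) = h₀(q) - (ε/2)‖P(v - κ(q))‖²` satisfies the barrier differential inequality
`φ' ≥ -α(φ)` on `[0, T)` and `h(q(0), v(0)) ≥ 0`, then the configuration stays safe:
`h₀(q(t)) ≥ 0` for all `t ∈ [0, T)`. -/
theorem stmt_15 (n : ℕ)
    (W : Submodule ℝ (EuclideanSpace ℝ (Fin n)))
    (P : EuclideanSpace ℝ (Fin n) →L[ℝ] EuclideanSpace ℝ (Fin n))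
    (hP : ∀ x, P x = (W.orthogonalProjectionOnto x : EuclideanSpace ℝ (Fin n)))
    (h₀ : EuclideanSpace ℝ (Fin n) → ℝ) (hh₀ : ContDiff ℝ 1 h₀)
    (κ : EuclideanSpace ℝ (Fin n) → EuclideanSpace ℝ (Fin n)) (hκ : ContDiff ℝ 1 κ)
    (ε : ℝ) (hε : 0 < ε)
    (h : EuclideanSpace ℝ (Fin n) → EuclideanSpace ℝ (Fin n) → ℝ)
    (hdef : ∀ q v, h q v = h₀ q - ε / 2 * ‖P (v - κ q)‖ ^ 2)
    (α : ℝ → ℝ)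
    (hα : LocallyLipschitz α) (hmono : StrictMono α) (hα0 : α 0 = 0)
    (T : ℝ≥0∞) (hT : 0 < T)
    (q v : ℝ → EuclideanSpace ℝ (Fin n))
    (φ' : ℝ → ℝ)
    (hdiff : ∀ t : ℝ, 0 ≤ t → ENNReal.ofReal t < T →
      HasDerivAt (fun s => h (q s) (v s)) (φ' t) t)
    (hineq : ∀ t : ℝ, 0 ≤ t → ENNReal.ofReal t < T → φ' t ≥ -α (h (q t) (v t)))
    (h0 : 0 ≤ h (q 0) (v 0)) :
    ∀ t : ℝ, 0 ≤ t → ENNReal.ofReal t < T → 0 ≤ h₀ (q t) := by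
  set φ : ℝ → ℝ := fun s => h (q s) (v s) with hφdef
  have key : ∀ t : ℝ, 0 ≤ t → ENNReal.ofReal t < T → 0 ≤ φ t := by
    intro t₁ ht₁ hlt
    by_contra hneg
    push_neg at hneg
    have ht₁0 : 0 < t₁ := by
      rcases ht₁.lt_or_eq with h' | h'
      · exact h'
      · exfalso; rw [← h'] at hneg; exact absurd h0 (not_le.mpr hneg)
    have hsub : ∀ s : ℝ, s ∈ Set.Icc (0:ℝ) t₁ → ENNReal.ofReal s < T := fun s hs =>
      lt_of_le_of_lt (ENNReal.ofReal_le_ofReal hs.2) hlt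
    have hcontOn : ContinuousOn φ (Set.Icc 0 t₁) := fun s hs =>
      ((hdiff s hs.1 (hsub s hs)).continuousAt).continuousWithinAt
    set S : Set ℝ := Set.Icc 0 t₁ ∩ φ ⁻¹' Set.Ici 0 with hSdef
    have hSne : (0:ℝ) ∈ S := ⟨⟨le_refl 0, ht₁⟩, h0⟩
    have hSbdd : BddAbove S := ⟨t₁, fun x hx => hx.1.2⟩
    have hSclosed : IsClosed S :=
      hcontOn.preimage_isClosed_of_isClosed isClosed_Icc isClosed_Ici
    set t₀ : ℝ := sSup S with ht₀def
    have ht₀mem : t₀ ∈ S := hSclosed.csSup_mem ⟨0, hSne⟩ hSbdd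
    have ht₀0 : 0 ≤ t₀ := ht₀mem.1.1
    have ht₀le : t₀ ≤ t₁ := ht₀mem.1.2
    have hφt₀ : 0 ≤ φ t₀ := ht₀mem.2
    have ht₀lt : t₀ < t₁ := by
      rcases ht₀le.lt_or_eq with h' | h'
      · exact h'
      · exfalso; rw [h'] at hφt₀; exact absurd hφt₀ (not_le.mpr hneg)
    have hIoo : ∀ s ∈ Set.Ioo t₀ t₁, φ s < 0 := by
      intro s hs
      by_contra hge
      push_neg at hge
      have : s ∈ S := ⟨⟨ht₀0.trans hs.1.le, hs.2.le⟩, hge⟩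
      exact absurd (le_csSup hSbdd this) (not_le.mpr hs.1)
    have hmonoφ : StrictMonoOn φ (Set.Icc t₀ t₁) := by
      apply strictMonoOn_of_deriv_pos (convex_Icc t₀ t₁)
      · exact hcontOn.mono (Set.Icc_subset_Icc ht₀0 (le_refl t₁))
      · intro s hs
        rw [interior_Icc] at hs
        have hs0 : 0 ≤ s := ht₀0.trans hs.1.le
        have hsT : ENNReal.ofReal s < T := hsub s ⟨hs0, hs.2.le⟩
        have hd := hdiff s hs0 hsT
        rw [hd.deriv]
        have hφs : φ s < 0 := hIoo s hs
        have : α (φ s) < α 0 := hmono hφs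
        rw [hα0] at this
        have := hineq s hs0 hsT
        linarith
    have : φ t₀ < φ t₁ :=
      hmonoφ ⟨le_refl t₀, ht₀le⟩ ⟨ht₀le, le_refl t₁⟩ ht₀lt
    linarith
  intro t ht hlt
  have hφt := key t ht hlt
  have := hdef (q t) (v t)
  have hnn : 0 ≤ ε / 2 * ‖P (v t - κ (q t))‖ ^ 2 := by positivity
  have hφeq : φ t = h₀ (q t) - ε / 2 * ‖P (v t - κ (q t))‖ ^ 2 := hdef (q t) (v t)
  linarith [hφeq ▸ hφt]
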